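/- Let c > 0 and consider the system on X = ℝ² given by A(n)(x₁,x₂) = (c a_n x₁, x₂/c), where a_n = e^{n(1+2^n)} if n is even and a_n = e^{−(n+1)(1+2^{n+1})} if n is odd, with projections P(n)(x₁,x₂) = (x₁,0). Then the system is not P-exponentially dichotomic: there do not exist constants N ≥ 1, α > 0 and β ≥ 0 such that e^{α(m−n)}(‖𝒜_P(m,n)x‖ + ‖Q(n)x‖) ≤ N(e^{βn}‖P(n)x‖ + e^{βm}‖𝒜_Q(m,n)x‖) for all m ≥ n and all x ∈ ℝ². -/

import Mathlib

open Real

/-- The evolution operator started at time `n`, after `k` steps: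
`A(n+k) ⋯ A(n+1)`. -/
noncomputable def evolFrom {X : Type*} [NormedAddCommGroup X] [NormedSpace ℝ X]
    (A : ℕ → X →L[ℝ] X) (n : ℕ) : ℕ → X →L[ℝ] X
  | 0 => 1
  | k + 1 => (A (n + k + 1)).comp (evolFrom A n k)

/-- The evolution operator `𝒜(m,n) = A(m) ⋯ A(n+1)` for `m ≥ n`, `𝒜(n,n) = I`. -/
noncomputable def evol {X : Type*} [NormedAddCommGroup X] [NormedSpace ℝ X]
    (A : ℕ → X →L[ℝ] X) (m n : ℕ) : X →L[ℝ] X :=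
  evolFrom A n (m - n)

/-- `𝒜_P(m,n) = 𝒜(m,n) P(n)`. -/
noncomputable def evolP {X : Type*} [NormedAddCommGroup X] [NormedSpace ℝ X]
    (A P : ℕ → X →L[ℝ] X) (m n : ℕ) : X →L[ℝ] X :=
  (evol A m n).comp (P n)

/-- `𝒜_Q(m,n) = 𝒜(m,n) Q(n)` where `Q(n) = I - P(n)`. -/
noncomputable def evolQ {X : Type*} [NormedAddCommGroup X] [NormedSpace ℝ X]
    (A P : ℕ → X →L[ℝ] X) (m n : ℕ) : X →L[ℝ] X :=
  (evol A m n).comp (1 - P n)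

/-- The system is P-exponentially dichotomic. -/
def IsED {X : Type*} [NormedAddCommGroup X] [NormedSpace ℝ X]
    (A P : ℕ → X →L[ℝ] X) : Prop :=
  ∃ N α β : ℝ, 1 ≤ N ∧ 0 < α ∧ 0 ≤ β ∧
    ∀ m n : ℕ, n ≤ m → ∀ x : X,
      exp (α * ((m : ℝ) - n)) * (‖evolP A P m n x‖ + ‖(1 - P n) x‖) ≤
        N * (exp (β * n) * ‖P n x‖ + exp (β * m) * ‖evolQ A P m n x‖)

/-- The diagonal operator `(x₁, x₂) ↦ (u x₁, v x₂)` on `ℝ²`. -/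
noncomputable def diagCLM (u v : ℝ) : ℝ × ℝ →L[ℝ] ℝ × ℝ :=
  (u • ContinuousLinearMap.fst ℝ ℝ ℝ).prod (v • ContinuousLinearMap.snd ℝ ℝ ℝ)

/-- The family of projections `P(n)(x₁, x₂) = (x₁, 0)` on `ℝ²`. -/
noncomputable def projFst : ℕ → (ℝ × ℝ →L[ℝ] ℝ × ℝ) :=
  fun _ => (ContinuousLinearMap.fst ℝ ℝ ℝ).prod 0

/-- Example: the system `A(n)(x₁,x₂) = (c aₙ x₁, x₂/c)` is not
P-exponentially dichotomic. -/
theorem example_not_exponential_dichotomy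
    (c : ℝ) (hc : 0 < c)
    (a : ℕ → ℝ)
    (ha : ∀ n, a n = if Even n then exp ((n : ℝ) * (1 + 2 ^ n))
      else exp (-(((n : ℝ) + 1) * (1 + 2 ^ (n + 1)))))
    (A : ℕ → ℝ × ℝ →L[ℝ] ℝ × ℝ) (hA : ∀ n, A n = diagCLM (c * a n) c⁻¹) :
    ¬ IsED A projFst := by
  rintro ⟨N, α, β, hN, hα, hβ, h⟩
  have hapos : ∀ n, 0 < a n := by
    intro n; rw [ha n]; split <;> exact exp_pos _
  -- Key inequality from the dichotomy with x = (1,0), m = n+1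
  have key : ∀ n : ℕ, c * a (n + 1) ≤ N * exp (β * n) := by
    intro n
    have h1 := h (n + 1) n (Nat.le_succ n) ((1 : ℝ), (0 : ℝ))
    have hev : evol A (n + 1) n = A (n + 1) := by
      show evolFrom A n ((n + 1) - n) = A (n + 1)
      have : (n + 1) - n = 1 := by omega
      rw [this]
      show (A (n + 0 + 1)).comp (evolFrom A n 0) = A (n + 1)
      show (A (n + 0 + 1)).comp 1 = A (n + 1)
      rw [ContinuousLinearMap.one_def, ContinuousLinearMap.comp_id]
    have hP : projFst n ((1 : ℝ), (0 : ℝ)) = ((1 : ℝ), (0 : ℝ)) := by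
      simp [projFst]
    have hQ : (1 - projFst n) ((1 : ℝ), (0 : ℝ)) = 0 := by
      simp [projFst, ContinuousLinearMap.sub_apply, Prod.ext_iff]
    have hEP : evolP A projFst (n + 1) n ((1 : ℝ), (0 : ℝ)) = (c * a (n + 1), 0) := by
      simp only [evolP, ContinuousLinearMap.comp_apply, hP, hev, hA (n + 1), diagCLM]
      simp
    have hEQ : evolQ A projFst (n + 1) n ((1 : ℝ), (0 : ℝ)) = 0 := by
      simp only [evolQ, ContinuousLinearMap.comp_apply, hQ, map_zero]
    rw [hEP, hEQ, hP, hQ] at h1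
    have hnorm1 : ‖((c * a (n + 1) : ℝ), (0 : ℝ))‖ = c * a (n + 1) := by
      rw [Prod.norm_def, norm_zero, Real.norm_eq_abs,
        abs_of_pos (mul_pos hc (hapos (n + 1))),
        max_eq_left (mul_pos hc (hapos (n + 1))).le]
    have hnorm2 : ‖((1 : ℝ), (0 : ℝ))‖ = 1 := by
      rw [Prod.norm_def]; simp
    rw [hnorm1, hnorm2] at h1
    simp only [norm_zero, mul_zero, add_zero, mul_one] at h1
    have harg : α * (((n : ℝ) + 1) - n) = α := by ring
    have hexp1 : (1 : ℝ) ≤ exp (α * (((n + 1 : ℕ) : ℝ) - n)) := by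
      rw [Nat.cast_add, Nat.cast_one, harg]
      exact one_le_exp hα.le
    calc c * a (n + 1) = 1 * (c * a (n + 1)) := by ring
      _ ≤ exp (α * (((n + 1 : ℕ) : ℝ) - n)) * (c * a (n + 1)) := by
          apply mul_le_mul_of_nonneg_right hexp1
          exact (mul_pos hc (hapos (n + 1))).le
      _ ≤ N * exp (β * n) := h1
  -- Choose n odd and large enough to contradict `key`
  set k : ℕ := ⌈max β (N / c)⌉₊ with hk
  set n : ℕ := 2 * k + 1 with hn
  have hodd : ¬ Even (n + 1) → False := by
    intro hcon; exact hcon ⟨k + 1, by omega⟩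
  have heven : Even (n + 1) := ⟨k + 1, by omega⟩
  have han1 : a (n + 1) = exp (((n : ℝ) + 1) * (1 + 2 ^ (n + 1))) := by
    rw [ha (n + 1), if_pos heven]; push_cast; ring_nf
  have hkey := key n
  rw [han1] at hkey
  -- bounds: n ≥ β and n ≥ N/c
  have hnb : β ≤ (n : ℝ) := by
    calc β ≤ (k : ℝ) := (Nat.le_ceil _).trans' (le_max_left _ _) |>.trans (by exact_mod_cast Nat.le_ceil _ |>.trans (le_refl _))
      _ ≤ (n : ℝ) := by exact_mod_cast (by omega : k ≤ n)
  have hnc : N / c ≤ (n : ℝ) := by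
    calc N / c ≤ (k : ℝ) := (le_max_right β (N / c)).trans (Nat.le_ceil _)
      _ ≤ (n : ℝ) := by exact_mod_cast (by omega : k ≤ n)
  -- 2^{n+1} ≥ n+2
  have hpow : (n : ℝ) + 2 ≤ 2 ^ (n + 1) := by
    have := Nat.lt_two_pow_self (n := n + 1)
    have h2 : (n : ℝ) + 2 ≤ ((2 : ℕ) ^ (n + 1) : ℕ) := by
      exact_mod_cast this
    calc (n : ℝ) + 2 ≤ ((2 ^ (n + 1) : ℕ) : ℝ) := h2
      _ = 2 ^ (n + 1) := by push_cast; ring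
  have hE : β * n + N / c < ((n : ℝ) + 1) * (1 + 2 ^ (n + 1)) := by
    have h1 : β * n ≤ (n : ℝ) * n :=
      mul_le_mul_of_nonneg_right hnb (Nat.cast_nonneg n)
    have h2 : ((n : ℝ) + 1) * ((n : ℝ) + 3) ≤ ((n : ℝ) + 1) * (1 + 2 ^ (n + 1)) := by
      apply mul_le_mul_of_nonneg_left _ (by positivity)
      linarith
    nlinarith [Nat.cast_nonneg (α := ℝ) n]
  -- derive contradiction
  have hNc : N / c < exp (((n : ℝ) + 1) * (1 + 2 ^ (n + 1)) - β * n) := by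
    have := add_one_le_exp (((n : ℝ) + 1) * (1 + 2 ^ (n + 1)) - β * n)
    linarith
  have hlt : N * exp (β * n) < c * exp (((n : ℝ) + 1) * (1 + 2 ^ (n + 1))) := by
    have hexp : exp (((n : ℝ) + 1) * (1 + 2 ^ (n + 1)))
        = exp (((n : ℝ) + 1) * (1 + 2 ^ (n + 1)) - β * n) * exp (β * n) := by
      rw [← exp_add]; ring_nf
    rw [hexp]
    have h3 : N / c * exp (β * n) < exp (((n : ℝ) + 1) * (1 + 2 ^ (n + 1)) - β * n) * exp (β * n) :=
      mul_lt_mul_of_pos_right hNc (exp_pos _)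
    calc N * exp (β * n) = c * (N / c * exp (β * n)) := by field_simp
      _ < c * (exp (((n : ℝ) + 1) * (1 + 2 ^ (n + 1)) - β * n) * exp (β * n)) :=
          mul_lt_mul_of_pos_left h3 hc
  linarith
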